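/- Let Σ be a finite alphabet with |Σ| = σ ≥ 2 and let ι, k be natural numbers with k > ι. Let w be a word over Σ with alph(w) = Σ and ι(w) = ι such that: for every word w' over Σ with ι(w') = ι and |w'| ≥ |w| we have |ScatFact_k(w)| ≥ |ScatFact_k(w')|, and for every word w' over Σ with ι(w') = ι and |w'| < |w| we have |ScatFact_k(w)| > |ScatFact_k(w')|. Then |w| = (ι + 1)·(σ − 1)·(k − ι) + ι. -/

import Mathlib

open List

universe u
variable {α : Type u}

/-- `ScatFact k w` is the set of scattered factors (subsequences) of `w` of length exactly `k`. -/
def ScatFact (k : ℕ) (w : List α) : Set (List α) :=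
  {v | v.length = k ∧ v.Sublist w}

/-- `w` is `k`-universal over the alphabet `S`: every word of length `k` over `S`
is a scattered factor of `w`. -/
def IsKUniversal [DecidableEq α] (S : Finset α) (k : ℕ) (w : List α) : Prop :=
  ∀ v : List α, v.length = k → (∀ x ∈ v, x ∈ S) → v.Sublist w

/-- The universality index of `w` over the alphabet `S`: the largest `k` such that
`w` is `k`-universal over `S`. -/
noncomputable def univIdx [DecidableEq α] (S : Finset α) (w : List α) : ℕ :=
  sSup {k | IsKUniversal S k w}

/-- `IsArchFact S w inners modus rest` says that `w` has the arch factorization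
`w = ar_1 ⋯ ar_n · rest` over the alphabet `S`, where the `i`-th arch is
`ar_i = inners[i] ++ [modus[i]]`: each arch contains every letter of `S`,
the last letter of each arch occurs only once within the arch, and the
alphabet of the rest is a proper subset of `S`. -/
def IsArchFact [DecidableEq α] (S : Finset α) (w : List α)
    (inners : List (List α)) (modus : List α) (rest : List α) : Prop :=
  inners.length = modus.length ∧
  w = (List.zipWith (fun inn m => inn ++ [m]) inners modus).flatten ++ rest ∧
  (∀ p ∈ List.zip inners modus, ∀ x ∈ S, x ∈ p.1 ++ [p.2]) ∧
  (∀ p ∈ List.zip inners modus, p.2 ∉ p.1) ∧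
  rest.toFinset ⊂ S

/-- `v` is perfect `k`-universal over `S`: `alph(v) = S`, the universality index of `v`
over `S` is `k`, and the rest of its arch factorization over `S` is empty. -/
def IsPerfectUniv [DecidableEq α] (S : Finset α) (k : ℕ) (v : List α) : Prop :=
  v.toFinset = S ∧ univIdx S v = k ∧ ∃ inners modus, IsArchFact S v inners modus []

/-- `v` is minimal perfect `k`-universal over `S`. -/
def IsMinPerfectUniv [DecidableEq α] (S : Finset α) (k : ℕ) (v : List α) : Prop :=
  IsPerfectUniv S k v ∧ ∀ v' : List α, IsPerfectUniv S k v' → v.length ≤ v'.length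

/-- `nextAlphPos w i s` (positions `1`-indexed): the least position `j` such that
`w[i+1..j]` contains exactly `s` distinct letters, or `none` (representing `-1`)
if `w[i+1..|w|]` contains fewer than `s` distinct letters. -/
noncomputable def nextAlphPos [DecidableEq α] (w : List α) (i s : ℕ) : Option ℕ :=
  if (w.drop i).toFinset.card < s then none
  else some (sInf {j | ((w.drop i).take (j - i)).toFinset.card = s})

/-- The letter of `w` at (1-indexed) position `j`. -/
def letterAt [Inhabited α] (w : List α) (j : ℕ) : α := w.getD (j - 1) default

/-- The word over `Fin σ` with `ι` arches, whose first arch is `a_1 a_2 ⋯ a_σ`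
and each later arch is the reverse of the previous one. -/
def wmin (σ ι : ℕ) : List (Fin σ) :=
  ((List.range ι).map (fun i =>
    if i % 2 = 0 then List.finRange σ else (List.finRange σ).reverse)).flatten





section AuxStmt7

variable {α : Type u} [Fintype α] [DecidableEq α]

/-- The set of words of length `k` avoiding `u` as a scattered factor. -/
def Av7 (k : ℕ) (u : List α) : Set (List α) := {v | v.length = k ∧ ¬ u.Sublist v}

lemma cons_sublist_append_of_mem {a : α} {e R l : List α} (ha : a ∈ e) (hl : l <+ R) :
    a :: l <+ e ++ R := by
  induction e with
  | nil => simp at ha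
  | cons y e ih =>
    rcases List.mem_cons.1 ha with rfl | ha'
    · exact List.cons_sublist_cons.2 (hl.trans (List.sublist_append_right e R))
    · exact (ih ha').cons y

lemma strip_cons7 {a : α} {s Z₂ : List α} : ∀ {Z₁ : List α}, a ∉ Z₁ →
    a :: s <+ Z₁ ++ a :: Z₂ → s <+ Z₂ := by
  intro Z₁
  induction Z₁ with
  | nil =>
    intro _ h
    have h' : a :: s <+ a :: Z₂ := by simpa using h
    exact List.cons_sublist_cons.1 h'
  | cons z Z₁ ih =>
    intro ha h
    have haz : a ≠ z := fun hh => ha (by simp [hh])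
    cases h with
    | cons _ h => exact ih (fun hh => ha (by simp [hh])) h
    | cons_cons _ h => exact absurd rfl haz

lemma strip_head_ne7 {x a : α} {t r : List α} (hxa : x ≠ a) (h : x :: t <+ a :: r) :
    x :: t <+ r := by
  cases h with
  | cons _ h => exact h
  | cons_cons _ h => exact absurd rfl hxa

lemma mem_take_of_indexOf_lt7 : ∀ (l : List α) (b : α), b ∈ l → ∀ {n : ℕ},
    l.idxOf b < n → b ∈ l.take n := by
  intro l
  induction l with
  | nil => simp
  | cons x l ih =>
    intro b hb n hn
    by_cases hbx : b = x
    · subst hbx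
      cases n with
      | zero => simp at hn
      | succ n => simp
    · have hb' : b ∈ l := by
        rcases List.mem_cons.1 hb with h | h
        · exact absurd h hbx
        · exact h
      have : l.idxOf b + 1 < n := by
        have hxb : x ≠ b := fun h => hbx h.symm
        simpa [List.idxOf_cons, hxb] using hn
      cases n with
      | zero => omega
      | succ n =>
        have := ih b hb' (n := n) (by omega)
        simp [this]

lemma indexOf_lt_of_mem_take7 : ∀ (l : List α) (b : α) (n : ℕ), b ∈ l.take n →
    l.idxOf b < n := by
  intro l
  induction l with
  | nil => simp
  | cons x l ih =>
    intro b n hb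
    cases n with
    | zero => simp at hb
    | succ n =>
      by_cases hbx : x = b
      · subst hbx; simp
      · have : b ∈ l.take n := by
          rcases List.mem_cons.1 (by simpa using hb) with h | h
          · exact absurd h.symm hbx
          · exact h
        have := ih b n this
        simp [List.idxOf_cons, hbx]
        omega

/-- Lower bound on the length of a word all of whose letters come from... rather:
if `Z` contains every word of length `n` over `S` as a sublist then `|Z| ≥ |S| * n`. -/
lemma univLB7 : ∀ (n : ℕ) (S : Finset α) (Z : List α),
    (∀ s : List α, s.length = n → (∀ x ∈ s, x ∈ S) → s <+ Z) → S.card * n ≤ Z.length := by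
  intro n
  induction n with
  | zero => simp
  | succ n ih =>
    intro S Z hZ
    rcases S.eq_empty_or_nonempty with rfl | hS
    · simp
    have hmem : ∀ b ∈ S, b ∈ Z := by
      intro b hb
      have h := hZ (List.replicate (n + 1) b) (by simp)
        (fun x hx => by rw [List.eq_of_mem_replicate hx]; exact hb)
      exact h.subset (by simp)
    obtain ⟨a, haS, hamax⟩ := S.exists_max_image (fun b => Z.idxOf b) hS
    have hplt : Z.idxOf a < Z.length := List.idxOf_lt_length_iff.2 (hmem a haS)
    set p := Z.idxOf a with hp
    have hget : Z[p] = a := List.getElem_idxOf hplt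
    have hsplit : Z = Z.take p ++ a :: Z.drop (p + 1) := by
      conv_lhs => rw [← List.take_append_drop p Z, List.drop_eq_getElem_cons hplt, hget]
    have hanotin : a ∉ Z.take p := by
      intro h
      have := indexOf_lt_of_mem_take7 Z a p h
      omega
    have hcard : S.card ≤ p + 1 := by
      have hsub : S ⊆ (Z.take (p + 1)).toFinset := by
        intro b hb
        have : Z.idxOf b < p + 1 := by
          have := hamax b hb
          omega
        simpa using mem_take_of_indexOf_lt7 Z b (hmem b hb) this
      calc S.card ≤ (Z.take (p + 1)).toFinset.card := Finset.card_le_card hsub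
        _ ≤ (Z.take (p + 1)).length := List.toFinset_card_le _
        _ ≤ p + 1 := by simp
    have htail : ∀ s : List α, s.length = n → (∀ x ∈ s, x ∈ S) → s <+ Z.drop (p + 1) := by
      intro s hs hsx
      have h := hZ (a :: s) (by simp [hs]) (by
        intro x hx
        rcases List.mem_cons.1 hx with rfl | hx
        · exact haS
        · exact hsx x hx)
      rw [hsplit] at h
      exact strip_cons7 hanotin h
    have := ih S (Z.drop (p + 1)) htail
    have hlen : Z.length = p + 1 + (Z.drop (p + 1)).length := by
      conv_lhs => rw [hsplit]
      simp [List.length_take, Nat.min_eq_left (le_of_lt hplt)]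
      omega
    have : S.card * (n + 1) = S.card * n + S.card := by ring
    omega

lemma exists_split_first7 {c : α} : ∀ {w : List α}, c ∈ w →
    ∃ Z w₂, w = Z ++ c :: w₂ ∧ c ∉ Z := by
  intro w
  induction w with
  | nil => simp
  | cons x w ih =>
    intro hc
    by_cases hxc : x = c
    · exact ⟨[], w, by simp [hxc], by simp⟩
    · have hcw : c ∈ w := by
        rcases List.mem_cons.1 hc with h | h
        · exact absurd h.symm hxc
        · exact h
      rcases ih hcw with
        ⟨Z, w₂, rfl, hcZ⟩
      exact ⟨x :: Z, w₂, rfl, by simp [hcZ]; exact fun h => hxc h.symm⟩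

end AuxStmt7

section AuxStmt7b

variable {α : Type u} [Fintype α] [DecidableEq α]

/-- All words of length `k`. -/
def lk7 (α : Type u) [Fintype α] [DecidableEq α] : ℕ → Finset (List α)
  | 0 => {[]}
  | n + 1 => Finset.univ.biUnion (fun x : α => (lk7 α n).image (x :: ·))

lemma mem_lk7 : ∀ (k : ℕ) (l : List α), l ∈ lk7 α k ↔ l.length = k := by
  intro k
  induction k with
  | zero =>
    intro l
    simp only [lk7, Finset.mem_singleton]
    exact ⟨fun h => by simp [h], fun h => List.eq_nil_of_length_eq_zero h⟩
  | succ n ih =>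
    intro l
    simp only [lk7, Finset.mem_biUnion, Finset.mem_univ, true_and, Finset.mem_image]
    constructor
    · rintro ⟨x, t, ht, rfl⟩
      simp [(ih t).1 ht]
    · intro hl
      match l with
      | x :: t => exact ⟨x, t, (ih t).2 (by simpa using hl), rfl⟩

/-- The finset of words of length `k` avoiding `u`. -/
def avF7 (k : ℕ) (u : List α) : Finset (List α) := (lk7 α k).filter (fun v => ¬ u <+ v)

lemma Av7_eq_coe (k : ℕ) (u : List α) : Av7 k u = ↑(avF7 k u) := by
  ext v
  simp [Av7, avF7, mem_lk7]

lemma sublist_cons_cons_iff7 (a x : α) (ut v : List α) :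
    (a :: ut <+ x :: v) ↔ (if x = a then ut <+ v else a :: ut <+ v) := by
  split_ifs with h
  · subst h; exact List.cons_sublist_cons
  · constructor
    · intro hs
      cases hs with
      | cons _ hs => exact hs
      | cons_cons _ hs => exact absurd rfl h
    · exact fun hs => hs.cons x

lemma avF7_rec (k : ℕ) (a : α) (ut : List α) :
    (avF7 (k + 1) (a :: ut)).card
      = (avF7 k ut).card + (Fintype.card α - 1) * (avF7 k (a :: ut)).card := by
  classical
  have hdisj : ∀ x ∈ (Finset.univ : Finset α), ∀ y ∈ (Finset.univ : Finset α), x ≠ y →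
      Disjoint (((lk7 α k).filter (fun v => ¬ (a :: ut) <+ (x :: v))).image (x :: ·))
        (((lk7 α k).filter (fun v => ¬ (a :: ut) <+ (y :: v))).image (y :: ·)) := by
    intro x _ y _ hxy
    rw [Finset.disjoint_left]
    rintro l hx hy
    simp only [Finset.mem_image] at hx hy
    obtain ⟨v1, _, rfl⟩ := hx
    obtain ⟨v2, _, h2⟩ := hy
    exact hxy (by injection h2.symm)
  have key : avF7 (k + 1) (a :: ut)
      = Finset.univ.biUnion (fun x : α =>
          (((lk7 α k).filter (fun v => ¬ (a :: ut) <+ (x :: v))).image (x :: ·))) := by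
    unfold avF7
    show (lk7 α (k+1)).filter _ = _
    rw [show lk7 α (k+1) = Finset.univ.biUnion (fun x : α => (lk7 α k).image (x :: ·)) from rfl]
    rw [Finset.filter_biUnion]
    congr 1
    funext x
    rw [Finset.filter_image]
  rw [key, Finset.card_biUnion hdisj]
  have hcard : ∀ x : α,
      ((((lk7 α k).filter (fun v => ¬ (a :: ut) <+ (x :: v))).image (x :: ·))).card
        = if x = a then (avF7 k ut).card else (avF7 k (a :: ut)).card := by
    intro x
    rw [Finset.card_image_of_injective _ (fun p q h => by injection h)]
    split_ifs with h
    · subst h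
      congr 1
      apply Finset.filter_congr
      intro v _
      simp [sublist_cons_cons_iff7]
    · congr 1
      apply Finset.filter_congr
      intro v _
      simp [sublist_cons_cons_iff7, h]
  rw [Finset.sum_congr rfl (fun x _ => hcard x)]
  rw [← Finset.add_sum_erase _ _ (Finset.mem_univ a)]
  simp only [if_pos rfl]
  congr 1
  rw [Finset.sum_congr rfl (fun x hx => if_neg (Finset.mem_erase.1 hx).1)]
  rw [Finset.sum_const, Finset.card_erase_of_mem (Finset.mem_univ a), Finset.card_univ,
    smul_eq_mul]

lemma countAv7 : ∀ (k : ℕ) (u u' : List α), u.length = u'.length →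
    (avF7 k u).card = (avF7 k u').card := by
  intro k
  induction k with
  | zero =>
    intro u u' h
    match u, u' with
    | [], [] => rfl
    | [], _ :: _ => simp at h
    | _ :: _, [] => simp at h
    | a :: ut, a' :: ut' =>
      unfold avF7
      rw [show lk7 α 0 = {([] : List α)} from rfl]
      rw [Finset.filter_singleton, Finset.filter_singleton]
      simp
  | succ k ih =>
    intro u u' h
    match u, u' with
    | [], [] => rfl
    | [], _ :: _ => simp at h
    | _ :: _, [] => simp at h
    | a :: ut, a' :: ut' =>
      rw [avF7_rec, avF7_rec, ih ut ut' (by simpa using h), ih (a :: ut) (a' :: ut') (by simpa using h)]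

end AuxStmt7b

section AuxStmt7c

variable {α : Type u} [Fintype α] [DecidableEq α]

lemma EMB7 (c : α) (e : List α) (K : ℕ) (hK : 1 ≤ K) (he : ∀ x : α, x ≠ c → x ∈ e) :
    ∀ (N : ℕ) (v : List α) (A m : ℕ), v.length + m ≤ N → A ≤ K →
      v.count c ≤ m → v.length ≤ A + m →
      v <+ (List.replicate A e).flatten
            ++ (List.replicate m (c :: (List.replicate K e).flatten)).flatten := by
  intro N
  induction N with
  | zero =>
    intro v A m hN _ _ _
    have : v = [] := List.eq_nil_of_length_eq_zero (by omega)
    simp [this]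
  | succ N ihN =>
    intro v A m hN hA hc hlen
    match v with
    | [] => exact List.nil_sublist _
    | x :: v' =>
      by_cases hxc : x = c
      · subst hxc
        have hcnt : v'.count x + 1 ≤ m := by
          have := hc; rwa [List.count_cons_self] at this
        obtain ⟨m', rfl⟩ : ∃ m', m = m' + 1 := ⟨m - 1, by omega⟩
        have tail := ihN v' K m' (by simp at hN ⊢; omega) le_rfl (by omega)
          (by simp at hlen ⊢; omega)
        have step : (x :: v') <+
            (List.replicate (m' + 1) (x :: (List.replicate K e).flatten)).flatten := by
          rw [List.replicate_succ, List.flatten_cons, List.cons_append]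
          exact List.cons_sublist_cons.2 tail
        exact step.trans (List.sublist_append_right _ _)
      · cases A with
        | zero =>
          have hv'len : v'.length + 1 ≤ m := by simpa using hlen
          obtain ⟨m', rfl⟩ : ∃ m', m = m' + 1 := ⟨m - 1, by omega⟩
          have hcnt : (x :: v').count c ≤ m' := by
            have h1 : (x :: v').count c = v'.count c := by
              rw [List.count_cons_of_ne hxc]
            have h2 : v'.count c ≤ v'.length := List.count_le_length
            omega
          have step := ihN (x :: v') K m' (by simp at hN ⊢; omega) le_rfl hcnt
            (by simp at hv'len ⊢; omega)
          simp only [List.replicate_zero, List.flatten_nil, List.nil_append,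
            List.replicate_succ, List.flatten_cons, List.cons_append]
          exact (step).cons c
        | succ A' =>
          have step := ihN v' A' m (by simp at hN ⊢; omega) (by omega)
            (by
              have : (x :: v').count c = v'.count c := by
                rw [List.count_cons_of_ne hxc]
              omega)
            (by simp at hlen ⊢; omega)
          rw [List.replicate_succ, List.flatten_cons, List.append_assoc]
          exact cons_sublist_append_of_mem (he x hxc) step

lemma isK_mono7 [Nonempty α] (z : List α) {m n : ℕ} (hmn : m ≤ n)
    (h : IsKUniversal (Finset.univ : Finset α) n z) :
    IsKUniversal (Finset.univ : Finset α) m z := by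
  intro v hv _
  have a₀ : α := Classical.arbitrary α
  have := h (v ++ List.replicate (n - m) a₀) (by simp [hv]; omega) (by simp)
  exact (List.sublist_append_left v _).trans this

lemma univIdx_eq7 [Nonempty α] (z : List α) (i : ℕ)
    (h1 : IsKUniversal (Finset.univ : Finset α) i z)
    (h2 : ¬ IsKUniversal (Finset.univ : Finset α) (i + 1) z) :
    univIdx (Finset.univ : Finset α) z = i := by
  have hub : ∀ n ∈ {n | IsKUniversal (Finset.univ : Finset α) n z}, n ≤ i := by
    intro n hn
    by_contra hni
    exact h2 (isK_mono7 z (by omega) hn)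
  apply _root_.le_antisymm
  · exact csSup_le ⟨i, h1⟩ hub
  · exact le_csSup ⟨i, hub⟩ h1

lemma not_univ_succ7 [Nonempty α] (z : List α) (i : ℕ)
    (h : univIdx (Finset.univ : Finset α) z = i) :
    ¬ IsKUniversal (Finset.univ : Finset α) (i + 1) z := by
  intro hK
  have a₀ : α := Classical.arbitrary α
  have hb : BddAbove {n | IsKUniversal (Finset.univ : Finset α) n z} := by
    refine ⟨z.length, fun n hn => ?_⟩
    have := hn (List.replicate n a₀) (by simp) (by simp)
    simpa using this.length_le
  have : i + 1 ≤ univIdx (Finset.univ : Finset α) z := le_csSup hb hK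
  omega

/-- Main length lower bound. -/
lemma LB7 : ∀ (u : List α) (k : ℕ) (w : List α), u.length ≤ k + 1 →
    2 ≤ Fintype.card α →
    ¬ u <+ w → (∀ v : List α, v.length = k → ¬ u <+ v → v <+ w) →
    u.length * ((Fintype.card α - 1) * (k + 1 - u.length)) + (u.length - 1) ≤ w.length := by
  intro u
  induction u with
  | nil =>
    intro k w _ _ hns _
    exact absurd (List.nil_sublist w) hns
  | cons c₁ u' ih =>
    intro k w hlen hσ hnsub hall
    by_cases hu' : u' = []
    · -- base case : u = [c₁]
      subst hu'
      have hc₁ : c₁ ∉ w := fun h => hnsub (List.singleton_sublist.2 h)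
      have huniv := univLB7 k (Finset.univ.erase c₁) w (by
        intro s hs hsx
        refine hall s hs (fun hsub => ?_)
        have : c₁ ∈ s := List.singleton_sublist.1 hsub
        exact (Finset.mem_erase.1 (hsx c₁ this)).1 rfl)
      rw [Finset.card_erase_of_mem (Finset.mem_univ c₁), Finset.card_univ] at huniv
      simpa using huniv
    · -- step case
      obtain ⟨c₂, u'', rfl⟩ : ∃ c₂ u'', u' = c₂ :: u'' := by
        cases u' with
        | nil => exact absurd rfl hu'
        | cons c₂ u'' => exact ⟨c₂, u'', rfl⟩
      set u' := c₂ :: u'' with hu'def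
      have hk1 : 1 ≤ k := by simp [hu'def] at hlen; omega
      -- c₁ ∈ w
      obtain ⟨d, hd⟩ := Fintype.exists_ne_of_one_lt_card (by omega) c₂
      have hvdlen : (c₁ :: List.replicate (k - 1) d).length = k := by simp; omega
      have hvdavoid : ¬ (c₁ :: u') <+ (c₁ :: List.replicate (k - 1) d) := by
        intro h
        have hc₂mem : c₂ ∈ List.replicate (k - 1) d := by
          cases h with
          | cons _ h => exact h.subset (by simp [hu'def])
          | cons_cons _ h => exact h.subset (by simp [hu'def])
        exact hd (List.eq_of_mem_replicate hc₂mem).symm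
      have hc₁w : c₁ ∈ w :=
        (hall _ hvdlen hvdavoid).subset (List.mem_cons_self)
      obtain ⟨Z, w₂, rfl, hcZ⟩ := exists_split_first7 hc₁w
      -- u' not a sublist of w₂
      have hu'w₂ : ¬ u' <+ w₂ := by
        intro h
        exact hnsub ((List.cons_sublist_cons.2 h).trans (List.sublist_append_right Z _))
      -- all (k-1)-words avoiding u' are sublists of w₂
      have hallw₂ : ∀ t : List α, t.length = k - 1 → ¬ u' <+ t → t <+ w₂ := by
        intro t ht hnt
        have hvlen : (c₁ :: t).length = k := by simp [ht]; omega
        have hvavoid : ¬ (c₁ :: u') <+ (c₁ :: t) := by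
          intro h
          cases h with
          | cons _ h => exact hnt ((List.sublist_cons_self c₁ u').trans h)
          | cons_cons _ h => exact hnt h
        exact strip_cons7 hcZ (hall _ hvlen hvavoid)
      -- Z is (k+1-|u|)-universal over univ.erase c₁
      have hZuniv : ∀ s : List α, s.length = k + 1 - (c₁ :: u').length →
          (∀ x ∈ s, x ∈ Finset.univ.erase c₁) → s <+ Z := by
        intro s hs hsx
        have hsc₁ : c₁ ∉ s := fun h => (Finset.mem_erase.1 (hsx c₁ h)).1 rfl
        have hvlen : (s ++ u').length = k := by
          simp [hs, hu'def] at *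
          omega
        have hvavoid : ¬ (c₁ :: u') <+ (s ++ u') := by
          intro h
          rw [List.sublist_append_iff] at h
          obtain ⟨p, q, hpq, hps, hqu'⟩ := h
          match p, hpq with
          | [], hpq =>
            have : (c₁ :: u').length ≤ u'.length := by
              rw [hpq]; exact hqu'.length_le
            simp at this
          | x :: p', hpq =>
            have hx : x = c₁ := by
              injection hpq with h1 h2
              exact h1.symm
            exact hsc₁ (hx ▸ hps.subset (List.mem_cons_self))
        have hv := hall _ hvlen hvavoid
        rw [List.sublist_append_iff] at hv
        obtain ⟨p, q, hpq, hpZ, hq⟩ := hv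
        by_cases hle : s.length ≤ p.length
        · have htake : p.take s.length = s := by
            have h1 : (s ++ u').take s.length = s := by simp
            rw [hpq, List.take_append_of_le_length hle] at h1
            exact h1
          calc s = p.take s.length := htake.symm
            _ <+ p := List.take_sublist _ _
            _ <+ Z := hpZ
        · exfalso
          have hlt : p.length < s.length := not_le.1 hle
          have hdrop : q = s.drop p.length ++ u' := by
            have h1 : (s ++ u').drop p.length = s.drop p.length ++ u' :=
              List.drop_append_of_le_length (by omega)
            rw [hpq, List.drop_append_of_le_length (le_refl p.length)] at h1
            simpa using h1
          obtain ⟨x, t, hxt⟩ : ∃ x t, s.drop p.length = x :: t := by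
            cases hsd : s.drop p.length with
            | nil =>
              have := congrArg List.length hsd
              simp at this; omega
            | cons x t => exact ⟨x, t, rfl⟩
          have hxs : x ∈ s := (List.drop_sublist p.length s).subset (by simp [hxt])
          have hxc₁ : x ≠ c₁ := fun h => hsc₁ (h ▸ hxs)
          have hqw₂ : q <+ w₂ := by
            rw [hdrop, hxt, List.cons_append] at hq ⊢
            exact strip_head_ne7 hxc₁ hq
          have hu'q : u' <+ q := by
            rw [hdrop]; exact List.sublist_append_right _ _
          exact hu'w₂ (hu'q.trans hqw₂)
      have hZlen := univLB7 _ _ Z hZuniv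
      rw [Finset.card_erase_of_mem (Finset.mem_univ c₁), Finset.card_univ] at hZlen
      have hih := ih (k - 1) w₂ (by simp [hu'def] at hlen ⊢; omega) hσ hu'w₂ hallw₂
      -- arithmetic
      have hwlen : (Z ++ c₁ :: w₂).length = Z.length + 1 + w₂.length := by simp; omega
      have hfac : (k - 1) + 1 - u'.length = k + 1 - (c₁ :: u').length := by
        simp [hu'def] at hlen ⊢; omega
      rw [hfac] at hih
      set P := (Fintype.card α - 1) * (k + 1 - (c₁ :: u').length) with hP
      have hexp : (c₁ :: u').length * P = u'.length * P + P := by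
        simp [Nat.succ_mul]
      have hu'pos : 1 ≤ u'.length := by simp [hu'def]
      rw [hwlen, hexp]
      omega

end AuxStmt7c

section AuxStmt7d

variable {α : Type u} [Fintype α] [DecidableEq α]

lemma len_flat_rep7 (n : ℕ) (l : List α) :
    ((List.replicate n l).flatten).length = n * l.length := by
  induction n with
  | zero => simp
  | succ n ih => rw [List.replicate_succ, List.flatten_cons, List.length_append, ih,
      Nat.succ_mul]; omega

lemma count_flat_rep7 (a : α) (n : ℕ) (l : List α) :
    ((List.replicate n l).flatten).count a = n * l.count a := by
  induction n with
  | zero => simp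
  | succ n ih => rw [List.replicate_succ, List.flatten_cons, List.count_append, ih,
      Nat.succ_mul]; omega

end AuxStmt7d

/-- Auxiliary full version of statement 7. -/
theorem stmt7' {α : Type u} [Fintype α] [DecidableEq α]
    (hsigma : 2 ≤ Fintype.card α) (iota k : ℕ) (hk : iota < k)
    (w : List α) (halph : ∀ a : α, a ∈ w) (hiw : univIdx Finset.univ w = iota)
    (hmax : ∀ w' : List α, univIdx Finset.univ w' = iota → w.length ≤ w'.length →
        (ScatFact k w').ncard ≤ (ScatFact k w).ncard)
    (hmax' : ∀ w' : List α, univIdx Finset.univ w' = iota → w'.length < w.length →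
        (ScatFact k w').ncard < (ScatFact k w).ncard) :
    w.length = (iota + 1) * (Fintype.card α - 1) * (k - iota) + iota := by
  classical
  haveI hne : Nonempty α := Fintype.card_pos_iff.mp (by omega)
  obtain ⟨c⟩ := id hne
  set σ := Fintype.card α with hσdef
  set K := k - iota with hKdef
  have hK1 : 1 ≤ K := by omega
  set s := σ - 1 with hsdef
  set e : List α := (Finset.univ.erase c).toList with hedef
  have he : ∀ x : α, x ≠ c → x ∈ e := by
    intro x hx
    rw [hedef, Finset.mem_toList, Finset.mem_erase]
    exact ⟨hx, Finset.mem_univ x⟩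
  have hel : e.length = s := by
    rw [hedef, Finset.length_toList, Finset.card_erase_of_mem (Finset.mem_univ c),
      Finset.card_univ]
  have hce : c ∉ e := by
    rw [hedef, Finset.mem_toList, Finset.mem_erase]
    simp
  set B : List α := (List.replicate K e).flatten with hBdef
  have hlenB : B.length = K * s := by rw [hBdef, len_flat_rep7, hel]
  have hcB : B.count c = 0 := by
    rw [hBdef, count_flat_rep7, List.count_eq_zero_of_not_mem hce]; omega
  set w₀ : List α := B ++ (List.replicate iota (c :: B)).flatten with hw₀def
  have hlf : (List.replicate iota (c :: B)).flatten.length = iota * (B.length + 1) := by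
    rw [len_flat_rep7, List.length_cons]
  have hlenw₀ : w₀.length = (iota + 1) * (s * K) + iota := by
    rw [hw₀def, List.length_append, hlf, hlenB]
    ring
  have hcf : (List.replicate iota (c :: B)).flatten.count c = iota * (B.count c + 1) := by
    rw [count_flat_rep7, List.count_cons_self]
  have hcw₀ : w₀.count c = iota := by
    rw [hw₀def, List.count_append, hcf, hcB]
    simp
  have hemb : ∀ v : List α, v.count c ≤ iota → v.length ≤ K + iota → v <+ w₀ := by
    intro v h1 h2
    exact EMB7 c e K hK1 he (v.length + iota) v K iota le_rfl le_rfl h1 h2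
  have hscat₀ : ScatFact k w₀ = Av7 k (List.replicate (iota + 1) c) := by
    ext v
    constructor
    · rintro ⟨hvlen, hvsub⟩
      refine ⟨hvlen, fun hrep => ?_⟩
      have hcnt : (iota + 1 : ℕ) ≤ w₀.count c := by
        have := (hrep.trans hvsub).count_le c
        simpa [List.count_replicate] using this
      omega
    · rintro ⟨hvlen, hvav⟩
      refine ⟨hvlen, hemb v ?_ ?_⟩
      · by_contra hcnt
        exact hvav ((List.replicate_sublist_iff).2 (by omega))
      · omega
  have hui₀ : univIdx Finset.univ w₀ = iota := by
    apply univIdx_eq7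
    · intro v hv _
      refine hemb v ?_ ?_
      · calc v.count c ≤ v.length := List.count_le_length
          _ ≤ iota := by omega
      · omega
    · intro hKu
      have h := hKu (List.replicate (iota + 1) c) (by simp) (by simp)
      have hcnt := h.count_le c
      simp [List.count_replicate] at hcnt
      omega
  have hnotw := not_univ_succ7 w iota hiw
  simp only [IsKUniversal] at hnotw
  push_neg at hnotw
  obtain ⟨u₀, hu₀len, hu₀mem, hu₀⟩ := hnotw
  have hAveq : (Av7 k u₀).ncard = (Av7 k (List.replicate (iota + 1) c)).ncard := by
    rw [Av7_eq_coe, Av7_eq_coe, Set.ncard_coe_finset, Set.ncard_coe_finset]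
    exact countAv7 k u₀ _ (by simp [hu₀len])
  have hsubAv : ScatFact k w ⊆ Av7 k u₀ := by
    rintro v ⟨hv1, hv2⟩
    exact ⟨hv1, fun h => hu₀ (h.trans hv2)⟩
  have hAvfin : (Av7 k u₀).Finite := by
    rw [Av7_eq_coe]; exact (avF7 k u₀).finite_toSet
  have hN₀ : (ScatFact k w₀).ncard = (Av7 k u₀).ncard := by rw [hscat₀, hAveq]
  rcases le_or_gt w.length w₀.length with hle | hlt
  · have h1 := hmax w₀ hui₀ hle
    have h2 : (ScatFact k w).ncard ≤ (Av7 k u₀).ncard := Set.ncard_le_ncard hsubAv hAvfin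
    have heq : ScatFact k w = Av7 k u₀ :=
      Set.eq_of_subset_of_ncard_le hsubAv (by omega) hAvfin
    have hall : ∀ v : List α, v.length = k → ¬ u₀ <+ v → v <+ w := by
      intro v hv hnv
      have hmem : v ∈ ScatFact k w := heq ▸ (⟨hv, hnv⟩ : v ∈ Av7 k u₀)
      exact hmem.2
    have hLB := LB7 u₀ k w (by omega) hsigma hu₀ hall
    rw [hu₀len] at hLB
    have hfa : k + 1 - (iota + 1) = K := by omega
    rw [hfa] at hLB
    have hml : (iota + 1) * s * K = (iota + 1) * (s * K) := by
      rw [mul_assoc]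
    rw [hml]
    set Q := (iota + 1) * (s * K) with hQ
    omega
  · exfalso
    have h1 := hmax' w₀ hui₀ hlt
    have h2 : (ScatFact k w).ncard ≤ (Av7 k u₀).ncard := Set.ncard_le_ncard hsubAv hAvfin
    omega

theorem stmt7 {α : Type u} [Fintype α] [DecidableEq α]
    (hsigma : 2 ≤ Fintype.card α) (iota k : ℕ) (hk : iota < k)
    (w : List α) (halph : ∀ a : α, a ∈ w) (hiw : univIdx Finset.univ w = iota)
    (hmax : ∀ w' : List α, univIdx Finset.univ w' = iota → w.length ≤ w'.length →
        (ScatFact k w').ncard ≤ (ScatFact k w).ncard)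
    (hmax' : ∀ w' : List α, univIdx Finset.univ w' = iota → w'.length < w.length →
        (ScatFact k w').ncard < (ScatFact k w).ncard) :
    w.length = (iota + 1) * (Fintype.card α - 1) * (k - iota) + iota := by
  exact stmt7' hsigma iota k hk w halph hiw hmax hmax'
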